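/- There exists a function f : ℕ → ℕ such that for every natural number n the following holds: if G is a finite group, N is a subgroup of G contained in the center Z(G), and the derived subgroup of the quotient group G/N has order at most n, then G has a subgroup K of index at most f(n) in G which is nilpotent of class at most 2. -/

import Mathlib

open scoped commutatorElement

/-- There is a function `f : ℕ → ℕ` such that any finite group `G` with a central subgroup
`N` such that the derived subgroup of `G/N` has order at most `n` contains a subgroup `K`
of index at most `f n` which is nilpotent of class at most two. -/
theorem finite_group_central_finiteByAbelian_nilpotent :
    ∃ f : ℕ → ℕ, ∀ n : ℕ, ∀ (G : Type) [Group G] [Finite G],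
      ∀ (N : Subgroup G) [N.Normal], N ≤ Subgroup.center G →
      Nat.card (commutator (G ⧸ N)) ≤ n →
      ∃ K : Subgroup G, K.index ≤ f n ∧
        ∀ a ∈ K, ∀ b ∈ K, ∀ c ∈ K, ⁅⁅a, b⁆, c⁆ = 1 := by
  refine ⟨fun n => (n * n) ^ n * n ^ n, ?_⟩
  intro n G _ _ N _ hNle hn
  set Q := G ⧸ N with hQdef
  set π : G →* Q := QuotientGroup.mk' N with hπdef
  have hπ : Function.Surjective π := QuotientGroup.mk'_surjective N
  set Q' : Subgroup Q := commutator Q with hQ'def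
  set C : Subgroup Q := Subgroup.centralizer (Q' : Set Q) with hCdef
  set K₂ : Subgroup G := C.comap π with hK₂def
  have hn1 : 1 ≤ n := le_trans Nat.card_pos hn
  -- central elements of N commute with everything
  have hc : ∀ z ∈ N, ∀ g : G, g * z = z * g := fun z hz =>
    Subgroup.mem_center_iff.mp (hNle hz)
  -- commutators only depend on the left entry mod N
  have L1 : ∀ t t' x : G, π t = π t' → ⁅t, x⁆ = ⁅t', x⁆ := by
    intro t t' x h
    set z : G := t⁻¹ * t' with hzdef
    have hz : z ∈ N := by
      rw [← QuotientGroup.ker_mk' N]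
      have : π z = 1 := by rw [hzdef, map_mul, map_inv, h, inv_mul_cancel]
      exact this
    have key : ∀ g : G, g * z = z * g := hc z hz
    have ht' : t' = t * z := by rw [hzdef]; group
    rw [ht', commutatorElement_def, commutatorElement_def, mul_inv_rev]
    calc t * x * t⁻¹ * x⁻¹
        = t * ((x * z) * z⁻¹) * t⁻¹ * x⁻¹ := by group
      _ = t * ((z * x) * z⁻¹) * t⁻¹ * x⁻¹ := by rw [key x]
      _ = t * z * x * (z⁻¹ * t⁻¹) * x⁻¹ := by group
  -- images of commutators lie in the derived subgroup of Q
  have hQ'mem : ∀ a b : G, π ⁅a, b⁆ ∈ Q' := by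
    intro a b
    rw [map_commutatorElement]
    exact Subgroup.commutator_mem_commutator (Subgroup.mem_top _) (Subgroup.mem_top _)
  -- commutator of (something over Q') with (something over C) lies in N
  have LmemN : ∀ t x : G, π t ∈ Q' → π x ∈ C → ⁅t, x⁆ ∈ N := by
    intro t x ht hx
    rw [← QuotientGroup.ker_mk' N]
    show π ⁅t, x⁆ = 1
    rw [map_commutatorElement, commutatorElement_eq_one_iff_mul_comm]
    exact Subgroup.mem_centralizer_iff.mp hx _ ht
  have Lcent : ∀ t x : G, π t ∈ Q' → π x ∈ C → ∀ g : G, g * ⁅t, x⁆ = ⁅t, x⁆ * g :=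
    fun t x ht hx => hc _ (LmemN t x ht hx)
  -- Hall–Witt style consequence
  have L2 : ∀ a b c : G, π a ∈ C → π b ∈ C → π c ∈ C →
      ⁅⁅a, b⁆, c⁆ = (⁅⁅c⁻¹, a⁻¹⁆, b⁆ * ⁅⁅b⁻¹, c⁆, a⁻¹⁆)⁻¹ := by
    intro a b c ha hb hZc
    have ha' : π a⁻¹ ∈ C := by rw [map_inv]; exact C.inv_mem ha
    have hA : ∀ g : G, g * ⁅⁅c⁻¹, a⁻¹⁆, b⁆ = ⁅⁅c⁻¹, a⁻¹⁆, b⁆ * g :=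
      Lcent _ _ (hQ'mem _ _) hb
    have hB : ∀ g : G, g * ⁅⁅b⁻¹, c⁆, a⁻¹⁆ = ⁅⁅b⁻¹, c⁆, a⁻¹⁆ * g :=
      Lcent _ _ (hQ'mem _ _) ha'
    set A : G := ⁅⁅c⁻¹, a⁻¹⁆, b⁆ with hAdef
    set B : G := ⁅⁅b⁻¹, c⁆, a⁻¹⁆ with hBdef
    have raw : ⁅c, ⁅a, b⁆⁆ = a * c * ⁅b, ⁅c⁻¹, a⁻¹⁆⁆⁻¹ * c⁻¹ * b * ⁅a⁻¹, ⁅b⁻¹, c⁆⁆⁻¹ * b⁻¹ * a⁻¹ := by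
      group
    rw [commutatorElement_inv b ⁅c⁻¹, a⁻¹⁆, commutatorElement_inv a⁻¹ ⁅b⁻¹, c⁆,
      ← hAdef, ← hBdef] at raw
    rw [← commutatorElement_inv c ⁅a, b⁆]
    refine congrArg Inv.inv ?_
    rw [raw]
    rw [show a * c * A = A * (a * c) from hA (a * c)]
    rw [show A * (a * c) * c⁻¹ * b * B = B * (A * (a * c) * c⁻¹ * b) from hB _]
    calc B * (A * (a * c) * c⁻¹ * b) * b⁻¹ * a⁻¹ = B * A := by group
      _ = A * B := hA B
  -- The coset representative function
  have hr : ∀ q : Q, π (Quotient.out q) = q := fun q => QuotientGroup.out_eq' q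
  -- The set of values of commutators of elements of C
  set S : Set Q := {q : Q | ∃ u ∈ C, ∃ v ∈ C, ⁅u, v⁆ = q} with hSdef
  have hSQ' : S ⊆ (Q' : Set Q) := by
    rintro q ⟨u, hu, v, hv, rfl⟩
    exact Subgroup.commutator_mem_commutator (Subgroup.mem_top _) (Subgroup.mem_top _)
  have hΦmem : ∀ (s : ↥S) (x : ↥K₂), ⁅Quotient.out s.1, (x : G)⁆ ∈ N := by
    intro s x
    refine LmemN _ _ ?_ x.2
    rw [hr]
    exact hSQ' s.2
  -- the homomorphism recording all commutators with the chosen representatives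
  set Φ : ↥K₂ →* (↥S → ↥N) :=
    { toFun := fun x s => ⟨⁅Quotient.out s.1, (x : G)⁆, hΦmem s x⟩
      map_one' := by
        funext s
        refine Subtype.ext ?_
        show ⁅Quotient.out s.1, ((1 : ↥K₂) : G)⁆ = 1
        simp
      map_mul' := by
        intro x y
        funext s
        refine Subtype.ext ?_
        show ⁅Quotient.out s.1, ((x : G) * (y : G))⁆
            = ⁅Quotient.out s.1, (x : G)⁆ * ⁅Quotient.out s.1, (y : G)⁆
        set t : G := Quotient.out s.1 with htdef
        have hcy : ∀ g : G, g * ⁅t, (y : G)⁆ = ⁅t, (y : G)⁆ * g := hc _ (hΦmem s y)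
        calc ⁅t, (x : G) * (y : G)⁆
            = ⁅t, (x : G)⁆ * ((x : G) * ⁅t, (y : G)⁆ * (x : G)⁻¹) := by group
          _ = ⁅t, (x : G)⁆ * (⁅t, (y : G)⁆ * (x : G) * (x : G)⁻¹) := by rw [hcy (x : G)]
          _ = ⁅t, (x : G)⁆ * ⁅t, (y : G)⁆ := by group } with hΦdef
  refine ⟨(MonoidHom.ker Φ).map K₂.subtype, ?_, ?_⟩
  · -- index bound
    rw [Subgroup.index_map_subtype]
    have hK₂C : K₂.index = C.index := Subgroup.index_comap_of_surjective C hπ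
    -- bound on the index of C
    have hCker : C = (MulAut.conjNormal (H := Q')).ker := by
      ext x
      simp only [MonoidHom.mem_ker]
      constructor
      · intro hx
        refine MulEquiv.ext fun s => ?_
        refine Subtype.ext ?_
        have h1 : ((MulAut.conjNormal x s : ↥Q') : Q) = x * s * x⁻¹ :=
          MulAut.conjNormal_apply x s
        have h2 : (s : Q) * x = x * s := Subgroup.mem_centralizer_iff.mp hx s.1 s.2
        show ((MulAut.conjNormal x s : ↥Q') : Q) = (s : Q)
        rw [h1, ← h2]
        group
      · intro hx
        rw [Subgroup.mem_centralizer_iff]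
        intro g hg
        have h1 : ((MulAut.conjNormal x ⟨g, hg⟩ : ↥Q') : Q) = x * g * x⁻¹ :=
          MulAut.conjNormal_apply x ⟨g, hg⟩
        rw [hx] at h1
        have h2 : x * g * x⁻¹ = g := by simpa using h1.symm
        calc g * x = x * g * x⁻¹ * x := by rw [h2]
          _ = x * g := by group
    have hCidx : C.index ≤ n ^ n := by
      rw [hCker, Subgroup.index_ker]
      have hinj : Function.Injective
          (fun (e : (MulAut.conjNormal (H := Q')).range) => ((e : MulAut ↥Q') : ↥Q' → ↥Q')) := by
        intro e₁ e₂ h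
        exact Subtype.ext (MulEquiv.ext (congrFun h))
      calc Nat.card (MulAut.conjNormal (H := Q')).range
          ≤ Nat.card (↥Q' → ↥Q') := Nat.card_le_card_of_injective _ hinj
        _ = Nat.card ↥Q' ^ Nat.card ↥Q' := Nat.card_fun
        _ ≤ n ^ n := le_trans (Nat.pow_le_pow_left hn _) (Nat.pow_le_pow_right hn1 hn)
    -- bound on the index of the kernel of Φ
    have hkerΦ : (MonoidHom.ker Φ).index ≤ (n * n) ^ n := by
      rw [Subgroup.index_ker]
      haveI : Fintype ↥S := Fintype.ofFinite _
      set Rng : ↥S → Set ↥N := fun s => Set.range (fun x : ↥K₂ => Φ x s) with hRngdef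
      have hJmem : ∀ (g : ↥Φ.range) (s : ↥S), (g : ↥S → ↥N) s ∈ Rng s := by
        rintro ⟨g, x, rfl⟩ s
        exact ⟨x, rfl⟩
      have hinj : Function.Injective
          (fun (g : ↥Φ.range) (s : ↥S) => (⟨(g : ↥S → ↥N) s, hJmem g s⟩ : ↥(Rng s))) := by
        intro g₁ g₂ h
        refine Subtype.ext (funext fun s => ?_)
        exact congrArg Subtype.val (congrFun h s)
      have hcoord : ∀ s : ↥S, Nat.card ↥(Rng s) ≤ n * n := by
        intro s
        obtain ⟨u, hu, v, hv, hs⟩ := s.2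
        set a : G := Quotient.out u with hadef
        set b : G := Quotient.out v with hbdef
        have haC : π a ∈ C := by rw [hadef, hr]; exact hu
        have hbC : π b ∈ C := by rw [hbdef, hr]; exact hv
        have key : ∀ x : ↥K₂, ((Φ x s : ↥N) : G) =
            (⁅Quotient.out (π ⁅(x : G)⁻¹, a⁻¹⁆), b⁆ *
             ⁅Quotient.out (π ⁅b⁻¹, (x : G)⁆), a⁻¹⁆)⁻¹ := by
          intro x
          have hx : π (x : G) ∈ C := x.2
          have e0 : ⁅Quotient.out s.1, (x : G)⁆ = ⁅⁅a, b⁆, (x : G)⁆ := by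
            refine L1 _ _ _ ?_
            rw [hr, map_commutatorElement, hadef, hbdef, hr, hr, hs]
          show ⁅Quotient.out s.1, (x : G)⁆ = _
          rw [e0, L2 a b (x : G) haC hbC hx,
            L1 ⁅(x : G)⁻¹, a⁻¹⁆ (Quotient.out (π ⁅(x : G)⁻¹, a⁻¹⁆)) b (hr _).symm,
            L1 ⁅b⁻¹, (x : G)⁆ (Quotient.out (π ⁅b⁻¹, (x : G)⁆)) a⁻¹ (hr _).symm]
        set F : Q × Q → G := fun p =>
          (⁅Quotient.out p.1, b⁆ * ⁅Quotient.out p.2, a⁻¹⁆)⁻¹ with hFdef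
        set T2 : Set G := F '' ((Q' : Set Q) ×ˢ (Q' : Set Q)) with hT2def
        have hmm : ∀ y : ↥(Rng s), ((y : ↥N) : G) ∈ T2 := by
          rintro ⟨y, x, rfl⟩
          exact ⟨(π ⁅(x : G)⁻¹, a⁻¹⁆, π ⁅b⁻¹, (x : G)⁆), ⟨hQ'mem _ _, hQ'mem _ _⟩,
            (key x).symm⟩
        have hinj2 : Function.Injective (fun y : ↥(Rng s) => (⟨((y : ↥N) : G), hmm y⟩ : ↥T2)) := by
          intro y₁ y₂ h
          have h' := congrArg (Subtype.val : ↥T2 → G) h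
          exact Subtype.ext (Subtype.ext h')
        calc Nat.card ↥(Rng s) ≤ Nat.card ↥T2 := Nat.card_le_card_of_injective _ hinj2
          _ ≤ Nat.card ↥((Q' : Set Q) ×ˢ (Q' : Set Q)) := by
              rw [hT2def]
              exact Nat.card_image_le (Set.toFinite _)
          _ = Nat.card (↥(Q' : Set Q) × ↥(Q' : Set Q)) :=
              Nat.card_congr (Equiv.Set.prod _ _)
          _ = Nat.card ↥Q' * Nat.card ↥Q' := Nat.card_prod _ _
          _ ≤ n * n := Nat.mul_le_mul hn hn
      have hScard : Fintype.card ↥S ≤ n := by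
        rw [← Nat.card_eq_fintype_card]
        calc Nat.card ↥S ≤ Nat.card ↥(Q' : Set Q) :=
              Nat.card_le_card_of_injective (Set.inclusion hSQ') (Set.inclusion_injective hSQ')
          _ ≤ n := hn
      calc Nat.card ↥Φ.range ≤ Nat.card (∀ s : ↥S, ↥(Rng s)) :=
            Nat.card_le_card_of_injective _ hinj
        _ = ∏ s : ↥S, Nat.card ↥(Rng s) := Nat.card_pi
        _ ≤ ∏ _s : ↥S, (n * n) := Finset.prod_le_prod' fun s _ => hcoord s
        _ = (n * n) ^ Fintype.card ↥S := by rw [Finset.prod_const, Finset.card_univ]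
        _ ≤ (n * n) ^ n := Nat.pow_le_pow_right (Nat.one_le_iff_ne_zero.mpr
            (by positivity)) hScard
    rw [hK₂C]
    exact Nat.mul_le_mul hkerΦ hCidx
  · -- nilpotency of class ≤ 2
    intro a ha b hb c hcK
    obtain ⟨a', ha', rfl⟩ := Subgroup.mem_map.mp ha
    obtain ⟨b', hb', rfl⟩ := Subgroup.mem_map.mp hb
    obtain ⟨c', hc', rfl⟩ := Subgroup.mem_map.mp hcK
    have hs : ⁅π (a' : G), π (b' : G)⁆ ∈ S := ⟨π (a' : G), a'.2, π (b' : G), b'.2, rfl⟩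
    have hΦc : Φ c' = 1 := MonoidHom.mem_ker.mp hc'
    have hval : ⁅Quotient.out ⁅π (a' : G), π (b' : G)⁆, (c' : G)⁆ = 1 :=
      congrArg Subtype.val (congrFun hΦc ⟨⁅π (a' : G), π (b' : G)⁆, hs⟩)
    have heq : ⁅(K₂.subtype a' : G), (K₂.subtype b' : G)⁆
        = ⁅(a' : G), (b' : G)⁆ := rfl
    rw [heq]
    rw [L1 ⁅(a' : G), (b' : G)⁆ (Quotient.out ⁅π (a' : G), π (b' : G)⁆) (K₂.subtype c')
      (by rw [hr, map_commutatorElement])]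
    exact hval
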